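/- Let c₁, c₂, D₀, E > 0 be constants and let b₀, b', b be real numbers with 0 < b₀ < 1, 0 < b' < 1, 0 < b < 1, and b² > b₀, b² > b'. Let (aₙ)_{n≥1}, (wₙ)_{n≥1}, (zₙ)_{n≥1}, (uₙ)_{n≥1}, (vₙ)_{n≥1} be sequences of nonnegative real numbers satisfying, for all n ≥ 1: aₙ ≤ D₀·b₀^{2^n}, wₙ ≤ E·(b')^{2^n}, zₙ ≤ E, together with the recursive inequalities u_{n+1} ≤ c₁·(aₙ·uₙ + wₙ + aₙ·zₙ + aₙ²·vₙ) and v_{n+1} ≤ vₙ + c₂·(uₙ + aₙ·vₙ). Then there exists a constant D > 0 such that for all n ≥ 1: uₙ ≤ D·b^{2^n} and vₙ ≤ D·(1 − 2^{−n}). -/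

import Mathlib

open Filter

/-- `n^2 ≤ 2^n` for `n ≥ 4`. -/
lemma ck_aux_sq_le_two_pow : ∀ n : ℕ, 4 ≤ n → n ^ 2 ≤ 2 ^ n := by
  intro n hn
  induction n, hn using Nat.le_induction with
  | base => norm_num
  | succ n hn ih =>
    have h2 : (n + 1) ^ 2 ≤ 2 * n ^ 2 := by nlinarith
    calc (n + 1) ^ 2 ≤ 2 * n ^ 2 := h2
      _ ≤ 2 * 2 ^ n := by omega
      _ = 2 ^ (n + 1) := by ring

/-- Numerical induction behind the Cᵏ-estimates of the averaging algorithm. -/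
theorem ck_estimates_induction
    (c₁ c₂ D₀ E : ℝ) (hc₁ : 0 < c₁) (hc₂ : 0 < c₂) (hD₀ : 0 < D₀) (hE : 0 < E)
    (b₀ b' b : ℝ)
    (hb₀ : 0 < b₀) (hb₀1 : b₀ < 1)
    (hb' : 0 < b') (hb'1 : b' < 1)
    (hb : 0 < b) (hb1 : b < 1)
    (hbb₀ : b₀ < b ^ 2) (hbb' : b' < b ^ 2)
    (a w z u v : ℕ → ℝ)
    (ha0 : ∀ n, 1 ≤ n → 0 ≤ a n) (hw0 : ∀ n, 1 ≤ n → 0 ≤ w n)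
    (hz0 : ∀ n, 1 ≤ n → 0 ≤ z n) (hu0 : ∀ n, 1 ≤ n → 0 ≤ u n)
    (hv0 : ∀ n, 1 ≤ n → 0 ≤ v n)
    (ha : ∀ n, 1 ≤ n → a n ≤ D₀ * b₀ ^ (2 ^ n))
    (hw : ∀ n, 1 ≤ n → w n ≤ E * b' ^ (2 ^ n))
    (hz : ∀ n, 1 ≤ n → z n ≤ E)
    (hu : ∀ n, 1 ≤ n → u (n + 1) ≤ c₁ * (a n * u n + w n + a n * z n + (a n) ^ 2 * v n))
    (hv : ∀ n, 1 ≤ n → v (n + 1) ≤ v n + c₂ * (u n + a n * v n)) :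
    ∃ D : ℝ, 0 < D ∧ ∀ n, 1 ≤ n →
      u n ≤ D * b ^ (2 ^ n) ∧ v n ≤ D * (1 - (1 / 2 : ℝ) ^ n) := by
  have hb2 : b ^ 2 < b := by nlinarith
  have hb₀b : b₀ < b := hbb₀.trans hb2
  set ρ : ℝ := b₀ / b with hρdef
  have hρ0 : 0 ≤ ρ := by positivity
  have hρ1 : ρ < 1 := (div_lt_one hb).2 hb₀b
  set K : ℝ := 4 * c₁ * (D₀ + D₀ ^ 2) with hK
  have hK0 : 0 < K := by positivity
  -- first eventual condition
  have t1 : Tendsto (fun n : ℕ => K * ρ ^ (2 ^ n)) atTop (nhds 0) := by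
    have h := (tendsto_pow_atTop_nhds_zero_of_lt_one hρ0 hρ1).comp
      (tendsto_pow_atTop_atTop_of_one_lt (by norm_num : 1 < 2))
    simpa using h.const_mul K
  obtain ⟨N₁, hN₁⟩ := eventually_atTop.1 (t1.eventually_lt_const one_pos)
  -- second eventual condition
  obtain ⟨k, hk⟩ := exists_pow_lt_of_lt_one (by norm_num : (0 : ℝ) < 1 / 2) hb1
  have hq0 : 0 ≤ 2 * b ^ k := by positivity
  have hq1 : 2 * b ^ k < 1 := by linarith
  set C : ℝ := c₂ * (1 + D₀) with hC
  have hC0 : 0 < C := by positivity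
  have t2 : Tendsto (fun n : ℕ => 2 * C * (2 * b ^ k) ^ n) atTop (nhds 0) := by
    have h := tendsto_pow_atTop_nhds_zero_of_lt_one hq0 hq1
    simpa using h.const_mul (2 * C)
  obtain ⟨N₂, hN₂⟩ := eventually_atTop.1 (t2.eventually_lt_const one_pos)
  set n₀ : ℕ := N₁ + N₂ + k + 4 with hn₀def
  have hn₀1 : 1 ≤ n₀ := by omega
  -- condition Cu
  have Cu : ∀ m, n₀ ≤ m → K * b₀ ^ (2 ^ m) ≤ b ^ (2 ^ m) := by
    intro m hm
    have h1 : K * ρ ^ (2 ^ m) < 1 := hN₁ m (by omega)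
    have hbp : (0 : ℝ) < b ^ (2 ^ m) := by positivity
    have hρm : ρ ^ (2 ^ m) = b₀ ^ (2 ^ m) / b ^ (2 ^ m) := by
      rw [hρdef, div_pow]
    rw [hρm, ← mul_div_assoc, div_lt_one hbp] at h1
    linarith
  -- condition Cv
  have Cv : ∀ m, n₀ ≤ m → C * b ^ (2 ^ m) ≤ (1 / 2 : ℝ) ^ (m + 1) := by
    intro m hm
    have hkm : k * m ≤ 2 ^ m := by
      have h1 : m ^ 2 ≤ 2 ^ m := ck_aux_sq_le_two_pow m (by omega)
      have h2 : k * m ≤ m * m := Nat.mul_le_mul_right m (by omega)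
      calc k * m ≤ m * m := h2
        _ = m ^ 2 := by ring
        _ ≤ 2 ^ m := h1
    have hbm : b ^ (2 ^ m) ≤ (b ^ k) ^ m := by
      rw [← pow_mul]
      exact pow_le_pow_of_le_one hb.le hb1.le hkm
    have h2 : 2 * C * (2 * b ^ k) ^ m < 1 := hN₂ m (by omega)
    have hexp : (2 * b ^ k : ℝ) ^ m = 2 ^ m * (b ^ k) ^ m := mul_pow _ _ _
    have hhalf : ((1 / 2 : ℝ)) ^ (m + 1) = 1 / (2 ^ (m + 1)) := by
      rw [one_div, inv_pow, one_div]
    rw [hhalf, le_div_iff₀ (by positivity : (0:ℝ) < (2:ℝ) ^ (m + 1))]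
    have hmono : C * b ^ (2 ^ m) * 2 ^ (m + 1) ≤ C * (b ^ k) ^ m * 2 ^ (m + 1) :=
      mul_le_mul_of_nonneg_right (mul_le_mul_of_nonneg_left hbm hC0.le)
        (by positivity)
    have heq : C * (b ^ k) ^ m * 2 ^ (m + 1) = 2 * C * (2 ^ m * (b ^ k) ^ m) := by
      rw [pow_succ]; ring
    rw [hexp] at h2
    calc C * b ^ (2 ^ m) * 2 ^ (m + 1) ≤ C * (b ^ k) ^ m * 2 ^ (m + 1) := hmono
      _ = 2 * C * (2 ^ m * (b ^ k) ^ m) := heq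
      _ ≤ 1 := h2.le
  -- the constant D
  classical
  set S : Finset ℕ := Finset.Icc 1 n₀ with hS
  have hSne : S.Nonempty := ⟨1, by simp [hS]; omega⟩
  set f : ℕ → ℝ := fun n => max (u n / b ^ (2 ^ n)) (v n / (1 - (1 / 2 : ℝ) ^ n)) with hf
  have hden : ∀ n : ℕ, 1 ≤ n → (0 : ℝ) < 1 - (1 / 2 : ℝ) ^ n := by
    intro n hn
    have : ((1 : ℝ) / 2) ^ n < 1 := pow_lt_one₀ (by norm_num) (by norm_num) (by omega)
    linarith
  obtain ⟨D, hD0, hDE, hDf⟩ :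
      ∃ D : ℝ, 0 < D ∧ 4 * c₁ * E * (1 + D₀) ≤ D ∧ ∀ n ∈ S, f n ≤ D := by
    have hM0 : 0 ≤ S.sup' hSne f := by
      have h1 : f 1 ≤ S.sup' hSne f := Finset.le_sup' f (by simp [hS]; omega)
      have h2 : (0 : ℝ) ≤ f 1 := le_max_of_le_left
        (div_nonneg (hu0 1 le_rfl) (by positivity))
      linarith
    have hE4 : (0 : ℝ) ≤ 4 * c₁ * E * (1 + D₀) := by positivity
    refine ⟨S.sup' hSne f + 4 * c₁ * E * (1 + D₀) + 1, by linarith, by linarith, ?_⟩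
    intro n hnS
    have := Finset.le_sup' f hnS
    linarith
  have base : ∀ n, 1 ≤ n → n ≤ n₀ →
      u n ≤ D * b ^ (2 ^ n) ∧ v n ≤ D * (1 - (1 / 2 : ℝ) ^ n) := by
    intro n hn hnn
    have hfM : f n ≤ D := hDf n (by simp [hS]; omega)
    have hbp : (0 : ℝ) < b ^ (2 ^ n) := by positivity
    have hdn := hden n hn
    constructor
    · have h1 : u n / b ^ (2 ^ n) ≤ D :=
        le_trans (le_max_left _ (v n / (1 - (1 / 2 : ℝ) ^ n))) hfM
      calc u n = u n / b ^ (2 ^ n) * b ^ (2 ^ n) :=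
            (div_mul_cancel₀ (u n) hbp.ne').symm
        _ ≤ D * b ^ (2 ^ n) := mul_le_mul_of_nonneg_right h1 hbp.le
    · have h1 : v n / (1 - (1 / 2 : ℝ) ^ n) ≤ D :=
        le_trans (le_max_right (u n / b ^ (2 ^ n)) _) hfM
      calc v n = v n / (1 - (1 / 2 : ℝ) ^ n) * (1 - (1 / 2 : ℝ) ^ n) :=
            (div_mul_cancel₀ (v n) hdn.ne').symm
        _ ≤ D * (1 - (1 / 2 : ℝ) ^ n) := mul_le_mul_of_nonneg_right h1 hdn.le
  refine ⟨D, hD0, ?_⟩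
  intro n hn
  induction n, hn using Nat.le_induction with
  | base => exact base 1 le_rfl hn₀1
  | succ n hn ih =>
    by_cases hcase : n + 1 ≤ n₀
    · exact base (n + 1) (by omega) hcase
    · have hnn₀ : n₀ ≤ n := by omega
      obtain ⟨ihu, ihv⟩ := ih
      have hn1 : 1 ≤ n := hn
      have han := ha n hn1
      have ha0' := ha0 n hn1
      have hu0' := hu0 n hn1
      have hv0' := hv0 n hn1
      have hz0' := hz0 n hn1
      have hw0' := hw0 n hn1
      have hc₁' : (0 : ℝ) ≤ c₁ := hc₁.le
      have hbp : (0 : ℝ) < b ^ (2 ^ n) := by positivity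
      have hb₀p : (0 : ℝ) ≤ b₀ ^ (2 ^ n) := by positivity
      have hhp : (0 : ℝ) ≤ (1 / 2 : ℝ) ^ n := by positivity
      have hDh : (0 : ℝ) ≤ D * (1 / 2 : ℝ) ^ n := mul_nonneg hD0.le hhp
      have hvD : v n ≤ D := by
        linarith only [ihv, hDh]
      have huD : u n ≤ D * b ^ (2 ^ n) := ihu
      have hzE := hz n hn1
      have hwE := hw n hn1
      have eB : b ^ (2 ^ (n + 1)) = (b ^ (2 ^ n)) ^ 2 := by
        rw [pow_succ 2 n, pow_mul]
      have eB₀ : b₀ ^ (2 ^ (n + 1)) = (b₀ ^ (2 ^ n)) ^ 2 := by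
        rw [pow_succ 2 n, pow_mul]
      -- facts
      have F1 : K * b₀ ^ (2 ^ n) ≤ b ^ (2 ^ n) := Cu n hnn₀
      have F2 : K * (b₀ ^ (2 ^ n)) ^ 2 ≤ (b ^ (2 ^ n)) ^ 2 := by
        have := Cu (n + 1) (by omega)
        rwa [eB, eB₀] at this
      have F3 : b' ^ (2 ^ n) ≤ (b ^ (2 ^ n)) ^ 2 := by
        calc b' ^ (2 ^ n) ≤ (b ^ 2) ^ (2 ^ n) := pow_le_pow_left₀ hb'.le hbb'.le _
          _ = (b ^ (2 ^ n)) ^ 2 := by rw [← pow_mul, ← pow_mul, Nat.mul_comm]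
      have F4 : b₀ ^ (2 ^ n) ≤ (b ^ (2 ^ n)) ^ 2 := by
        calc b₀ ^ (2 ^ n) ≤ (b ^ 2) ^ (2 ^ n) := pow_le_pow_left₀ hb₀.le hbb₀.le _
          _ = (b ^ (2 ^ n)) ^ 2 := by rw [← pow_mul, ← pow_mul, Nat.mul_comm]
      have F6 : b₀ ^ (2 ^ n) ≤ b ^ (2 ^ n) := pow_le_pow_left₀ hb₀.le hb₀b.le _
      have hDEsq : 4 * c₁ * E * (1 + D₀) * (b ^ (2 ^ n)) ^ 2 ≤
          D * (b ^ (2 ^ n)) ^ 2 :=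
        mul_le_mul_of_nonneg_right hDE (sq_nonneg _)
      constructor
      · -- u estimate
        have step1 : u (n + 1) ≤ c₁ * (D₀ * b₀ ^ (2 ^ n) * (D * b ^ (2 ^ n)) +
            E * b' ^ (2 ^ n) + D₀ * b₀ ^ (2 ^ n) * E +
            (D₀ * b₀ ^ (2 ^ n)) ^ 2 * D) := by
          refine le_trans (hu n hn1) ?_
          have g1 : a n * u n ≤ D₀ * b₀ ^ (2 ^ n) * (D * b ^ (2 ^ n)) :=
            mul_le_mul han huD hu0' (by positivity)
          have g3 : a n * z n ≤ D₀ * b₀ ^ (2 ^ n) * E :=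
            mul_le_mul han hzE hz0' (by positivity)
          have g4 : a n ^ 2 * v n ≤ (D₀ * b₀ ^ (2 ^ n)) ^ 2 * D := by
            have hsq : a n ^ 2 ≤ (D₀ * b₀ ^ (2 ^ n)) ^ 2 :=
              pow_le_pow_left₀ ha0' han 2
            have g4a : a n ^ 2 * v n ≤ (D₀ * b₀ ^ (2 ^ n)) ^ 2 * v n :=
              mul_le_mul_of_nonneg_right hsq hv0'
            have g4b : (D₀ * b₀ ^ (2 ^ n)) ^ 2 * v n ≤ (D₀ * b₀ ^ (2 ^ n)) ^ 2 * D :=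
              mul_le_mul_of_nonneg_left hvD (by positivity)
            exact g4a.trans g4b
          exact mul_le_mul_of_nonneg_left
            (add_le_add (add_le_add (add_le_add g1 hwE) g3) g4) hc₁'
        have h1 : c₁ * (D₀ * b₀ ^ (2 ^ n) * (D * b ^ (2 ^ n))) ≤
            D / 4 * (b ^ (2 ^ n)) ^ 2 := by
          have hm := mul_le_mul_of_nonneg_right F1
            (show (0:ℝ) ≤ D * b ^ (2 ^ n) / 4 from
              div_nonneg (mul_nonneg hD0.le hbp.le) (by norm_num))
          have hpos : (0:ℝ) ≤ c₁ * D₀ ^ 2 * (b₀ ^ (2 ^ n) * (D * b ^ (2 ^ n))) :=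
            mul_nonneg (by positivity)
              (mul_nonneg hb₀p (mul_nonneg hD0.le hbp.le))
          rw [hK] at hm
          linarith only [hm, hpos]
        have h2 : c₁ * (E * b' ^ (2 ^ n)) ≤ D / 4 * (b ^ (2 ^ n)) ^ 2 := by
          have hm := mul_le_mul_of_nonneg_left F3 (by positivity : (0:ℝ) ≤ c₁ * E)
          have hpos : (0:ℝ) ≤ c₁ * E * D₀ * (b ^ (2 ^ n)) ^ 2 :=
            mul_nonneg (by positivity) (sq_nonneg _)
          linarith only [hm, hpos, hDEsq]
        have h3 : c₁ * (D₀ * b₀ ^ (2 ^ n) * E) ≤ D / 4 * (b ^ (2 ^ n)) ^ 2 := by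
          have hm := mul_le_mul_of_nonneg_left F4
            (by positivity : (0:ℝ) ≤ c₁ * D₀ * E)
          have hpos : (0:ℝ) ≤ c₁ * E * (b ^ (2 ^ n)) ^ 2 :=
            mul_nonneg (by positivity) (sq_nonneg _)
          linarith only [hm, hpos, hDEsq]
        have h4 : c₁ * ((D₀ * b₀ ^ (2 ^ n)) ^ 2 * D) ≤
            D / 4 * (b ^ (2 ^ n)) ^ 2 := by
          have hm := mul_le_mul_of_nonneg_right F2
            (show (0:ℝ) ≤ D / 4 from div_nonneg hD0.le (by norm_num))
          have hpos : (0:ℝ) ≤ c₁ * D₀ * ((b₀ ^ (2 ^ n)) ^ 2 * D) :=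
            mul_nonneg (by positivity) (mul_nonneg (sq_nonneg _) hD0.le)
          rw [hK] at hm
          linarith only [hm, hpos]
        rw [eB]
        linarith only [step1, h1, h2, h3, h4]
      · -- v estimate
        have m2 : a n * v n ≤ D₀ * b₀ ^ (2 ^ n) * D :=
          mul_le_mul han hvD hv0' (by positivity)
        have hC1 : c₂ * (u n + a n * v n) ≤
            c₂ * (D * b ^ (2 ^ n) + D₀ * b₀ ^ (2 ^ n) * D) :=
          mul_le_mul_of_nonneg_left (add_le_add huD m2) hc₂.le
        have hB2 : c₂ * D₀ * D * b₀ ^ (2 ^ n) ≤ c₂ * D₀ * D * b ^ (2 ^ n) :=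
          mul_le_mul_of_nonneg_left F6
            (mul_nonneg (mul_nonneg hc₂.le hD₀.le) hD0.le)
        have hA : D * (C * b ^ (2 ^ n)) ≤ D * (1 / 2 : ℝ) ^ (n + 1) :=
          mul_le_mul_of_nonneg_left (Cv n hnn₀) hD0.le
        have hqp : D * (1 / 2 : ℝ) ^ n = 2 * (D * (1 / 2 : ℝ) ^ (n + 1)) := by
          rw [pow_succ]; ring
        have hCexp : D * (C * b ^ (2 ^ n)) =
            c₂ * D * b ^ (2 ^ n) + c₂ * D₀ * D * b ^ (2 ^ n) := by
          rw [hC]; ring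
        rw [hCexp] at hA
        have hvstep := hv n hn1
        linarith only [hvstep, hC1, hB2, hA, hqp, ihv]
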